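/- arXiv:2510.01377 — 2 statements merged into one kernel-verified Lean document; each statement's English description precedes it below -/
import Mathlib

section
/- Let α ∈ (1, 2] and let U, V ∈ ℝ^{m×n} with U ≠ 0. Then ‖U + V‖_F^α ≤ ‖U‖_F^α + α‖U‖_F^{α−2}⟨U, V⟩ + 2‖V‖_F^α. -/
open Matrix Kronecker

/-- Spectral norm: ℓ²→ℓ² operator norm of a real matrix. -/
noncomputable def specNorm {ι κ : Type*} [Fintype ι] [Fintype κ] [DecidableEq κ]
    (A : Matrix ι κ ℝ) : ℝ :=
  ‖LinearMap.toContinuousLinearMap (Matrix.toEuclideanLin A)‖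

/-- Nuclear norm: trace of the positive semidefinite square root of `Aᵀ * A`. -/
noncomputable def nucNorm {ι κ : Type*} [Fintype ι] [Fintype κ] [DecidableEq κ]
    (A : Matrix ι κ ℝ) : ℝ :=
  Matrix.trace ((Matrix.posSemidef_conjTranspose_mul_self A).1.eigenvectorUnitary.1 *
    diagonal ((↑) ∘ (√·) ∘ (Matrix.posSemidef_conjTranspose_mul_self A).1.eigenvalues) *
    (star (Matrix.posSemidef_conjTranspose_mul_self A).1.eigenvectorUnitary : Matrix κ κ ℝ))

/-- Frobenius norm. -/
noncomputable def frobNorm {ι κ : Type*} [Fintype ι] [Fintype κ] (A : Matrix ι κ ℝ) : ℝ :=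
  Real.sqrt (∑ i, ∑ j, (A i j) ^ 2)

/-- Trace inner product `⟨A, B⟩ = trace (Aᵀ B)`. -/
noncomputable def tin {ι κ : Type*} [Fintype ι] [Fintype κ] (A B : Matrix ι κ ℝ) : ℝ :=
  Matrix.trace (Aᵀ * B)

/-- Vertical stacking of `N` matrices of size `m × n`. -/
def vstack {N m n : ℕ} (Y : Fin N → Matrix (Fin m) (Fin n) ℝ) :
    Matrix (Fin N × Fin m) (Fin n) ℝ :=
  fun p j => Y p.1 p.2 j



lemma tangent_rpow {x y p : ℝ} (hx : 0 ≤ x) (hy : 0 < y) (hp0 : 0 ≤ p) (hp1 : p ≤ 1) :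
    x ^ p ≤ y ^ p + p * y ^ (p - 1) * (x - y) := by
  have hs : -1 ≤ x / y - 1 := by
    have : 0 ≤ x / y := div_nonneg hx hy.le
    linarith
  have h := rpow_one_add_le_one_add_mul_self hs hp0 hp1
  rw [add_sub_cancel] at h
  have hyp : (0:ℝ) < y ^ p := Real.rpow_pos_of_pos hy p
  have h2 : x ^ p ≤ y ^ p * (1 + p * (x / y - 1)) := by
    have hxp : x ^ p = y ^ p * (x / y) ^ p := by
      rw [Real.div_rpow hx hy.le]
      field_simp
    rw [hxp]
    exact mul_le_mul_of_nonneg_left h hyp.le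
  have h3 : y ^ (p - 1) = y ^ p / y := by
    rw [Real.rpow_sub hy, Real.rpow_one]
  have heq : y ^ p * (1 + p * (x / y - 1)) = y ^ p + p * (y ^ p / y) * (x - y) := by
    field_simp
  rw [heq] at h2
  rw [h3]
  exact h2

lemma young_aux {a b α : ℝ} (ha : 0 ≤ a) (hb : 0 ≤ b) (hα1 : 1 < α) :
    α * (a ^ (α - 1) * b) ≤ (α - 1) * a ^ α + b ^ α := by
  have hα0 : (0:ℝ) < α := by linarith
  have hw : (α - 1) / α + 1 / α = 1 := by field_simp; ring
  have h := Real.geom_mean_le_arith_mean2_weighted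
    (div_nonneg (by linarith) hα0.le) (div_nonneg zero_le_one hα0.le)
    (Real.rpow_nonneg ha α) (Real.rpow_nonneg hb α) hw
  have e1 : (a ^ α) ^ ((α - 1) / α) = a ^ (α - 1) := by
    rw [← Real.rpow_mul ha]
    congr 1
    field_simp
  have e2 : (b ^ α) ^ (1 / α) = b := by
    rw [← Real.rpow_mul hb]
    rw [mul_one_div, div_self hα0.ne', Real.rpow_one]
  rw [e1, e2] at h
  have := mul_le_mul_of_nonneg_left h hα0.le
  calc α * (a ^ (α - 1) * b) ≤ α * ((α - 1) / α * a ^ α + 1 / α * b ^ α) := this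
    _ = (α - 1) * a ^ α + b ^ α := by field_simp

set_option maxHeartbeats 1000000 in
lemma key_scalar {α a b t c : ℝ} (hα1 : 1 < α) (hα2 : α ≤ 2) (ha : 0 < a) (hb : 0 ≤ b)
    (hc : 0 ≤ c) (hpyth : c ^ 2 = a ^ 2 + 2 * t + b ^ 2) (hcs : -(a * b) ≤ t) :
    c ^ α ≤ a ^ α + α * a ^ (α - 2) * t + 2 * b ^ α := by
  have hα0 : (0:ℝ) < α := by linarith
  have hp0 : (0:ℝ) ≤ α / 2 := by linarith
  have hp1 : α / 2 ≤ 1 := by linarith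
  have hc2 : (0:ℝ) ≤ c ^ 2 := sq_nonneg c
  have sq_rpow : ∀ z : ℝ, 0 < z → (z ^ 2) ^ (α / 2) = z ^ α := by
    intro z hz
    rw [← Real.rpow_natCast z 2, ← Real.rpow_mul hz.le]
    congr 1
    push_cast
    ring
  have sq_rpow' : ∀ z : ℝ, 0 < z → (z ^ 2) ^ (α / 2 - 1) = z ^ (α - 2) := by
    intro z hz
    rw [← Real.rpow_natCast z 2, ← Real.rpow_mul hz.le]
    congr 1
    ring
  have hca : c ^ α = (c ^ 2) ^ (α / 2) := by
    rw [← Real.rpow_natCast c 2, ← Real.rpow_mul hc]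
    congr 1
    ring
  have haα : (0:ℝ) ≤ a ^ α := Real.rpow_nonneg ha.le α
  have hbα : (0:ℝ) ≤ b ^ α := Real.rpow_nonneg hb α
  have haα2 : (0:ℝ) < a ^ (α - 2) := Real.rpow_pos_of_pos ha _
  by_cases hcase : b ≤ 2 * a
  · -- tangent at a^2
    have h1 := tangent_rpow hc2 (pow_pos ha 2) hp0 hp1
    rw [sq_rpow a ha, sq_rpow' a ha] at h1
    have hrem : α / 2 * a ^ (α - 2) * b ^ 2 ≤ 2 * b ^ α := by
      rcases eq_or_lt_of_le hb with hb0 | hb0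
      · rw [← hb0, Real.zero_rpow hα0.ne']
        norm_num
      · have hba : b / 2 ≤ a := by linarith
        have hb2 : (0:ℝ) < b / 2 := by linarith
        have f1 : a ^ (α - 2) ≤ (b / 2) ^ (α - 2) :=
          Real.rpow_le_rpow_of_nonpos hb2 hba (by linarith)
        have fb : b ^ (α - 2) * b ^ 2 = b ^ α := by
          rw [← Real.rpow_natCast b 2, ← Real.rpow_add hb0]
          norm_num
        have f2 : (b / 2) ^ (α - 2) * b ^ 2 = 2 ^ (2 - α) * b ^ α := by
          rw [Real.div_rpow hb (by norm_num : (0:ℝ) ≤ 2), div_mul_eq_mul_div, fb,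
            show (2:ℝ) - α = -(α - 2) by ring, Real.rpow_neg (by norm_num : (0:ℝ) ≤ 2)]
          field_simp
        have f3 : (2:ℝ) ^ (2 - α) ≤ 2 := by
          calc (2:ℝ) ^ (2 - α) ≤ 2 ^ (1:ℝ) :=
                Real.rpow_le_rpow_of_exponent_le one_le_two (by linarith)
            _ = 2 := Real.rpow_one 2
        have g1 : α / 2 * a ^ (α - 2) * b ^ 2 ≤ α / 2 * ((b / 2) ^ (α - 2) * b ^ 2) := by
          have := mul_le_mul_of_nonneg_right f1 (sq_nonneg b)
          nlinarith [this]
        rw [f2] at g1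
        nlinarith [g1, mul_le_mul_of_nonneg_right f3 hbα, hbα,
          Real.rpow_nonneg (by norm_num : (0:ℝ) ≤ 2) (2 - α)]
    have h1' : (c:ℝ) ^ 2 - a ^ 2 = 2 * t + b ^ 2 := by linarith [hpyth]
    calc c ^ α = (c ^ 2) ^ (α / 2) := hca
      _ ≤ a ^ α + α / 2 * a ^ (α - 2) * (c ^ 2 - a ^ 2) := h1
      _ = a ^ α + α * a ^ (α - 2) * t + α / 2 * a ^ (α - 2) * b ^ 2 := by rw [h1']; ring
      _ ≤ a ^ α + α * a ^ (α - 2) * t + 2 * b ^ α := by linarith [hrem]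
  · push_neg at hcase
    have hd0 : 0 < b - a := by linarith
    have had : a ≤ b - a := by linarith
    have hdsq : (b - a) ^ 2 ≤ c ^ 2 := by nlinarith [hcs, hpyth]
    have h1 := tangent_rpow hc2 (pow_pos hd0 2) hp0 hp1
    rw [sq_rpow _ hd0, sq_rpow' _ hd0] at h1
    have f1 : (b - a) ^ (α - 2) ≤ a ^ (α - 2) :=
      Real.rpow_le_rpow_of_nonpos ha had (by linarith)
    have f2 : α / 2 * (b - a) ^ (α - 2) * (c ^ 2 - (b - a) ^ 2)
        ≤ α / 2 * a ^ (α - 2) * (c ^ 2 - (b - a) ^ 2) := by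
      apply mul_le_mul_of_nonneg_right _ (by linarith)
      exact mul_le_mul_of_nonneg_left f1 hp0
    have hcd : c ^ 2 - (b - a) ^ 2 = 2 * t + 2 * (a * b) := by rw [hpyth]; ring
    have f3 : (b - a) ^ α ≤ b ^ α := Real.rpow_le_rpow hd0.le (by linarith) hα0.le
    have fya : a ^ (α - 2) * a = a ^ (α - 1) := by
      rw [← Real.rpow_add_one ha.ne']
      congr 1
      ring
    have young := young_aux ha.le hb hα1
    calc c ^ α = (c ^ 2) ^ (α / 2) := hca
      _ ≤ (b - a) ^ α + α / 2 * (b - a) ^ (α - 2) * (c ^ 2 - (b - a) ^ 2) := h1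
      _ ≤ (b - a) ^ α + α / 2 * a ^ (α - 2) * (c ^ 2 - (b - a) ^ 2) := by linarith [f2]
      _ = (b - a) ^ α + α * a ^ (α - 2) * t + α * (a ^ (α - 1) * b) := by
          rw [hcd, ← fya]; ring
      _ ≤ b ^ α + α * a ^ (α - 2) * t + ((α - 1) * a ^ α + b ^ α) := by
          linarith [f3, young]
      _ ≤ a ^ α + α * a ^ (α - 2) * t + 2 * b ^ α := by nlinarith [haα]

theorem stmt1 {m n : ℕ} (α : ℝ) (hα1 : 1 < α) (hα2 : α ≤ 2)
    (U V : Matrix (Fin m) (Fin n) ℝ) (hU : U ≠ 0) :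
    frobNorm (U + V) ^ α
      ≤ frobNorm U ^ α + α * frobNorm U ^ (α - 2) * tin U V + 2 * frobNorm V ^ α := by
  have htin : tin U V = ∑ i, ∑ j, U i j * V i j := by
    simp only [tin, Matrix.trace, Matrix.diag, Matrix.mul_apply, Matrix.transpose_apply]
    rw [Finset.sum_comm]
  have hSU : (0:ℝ) ≤ ∑ i, ∑ j, (U i j)^2 :=
    Finset.sum_nonneg fun i _ => Finset.sum_nonneg fun j _ => sq_nonneg _
  have hSV : (0:ℝ) ≤ ∑ i, ∑ j, (V i j)^2 :=
    Finset.sum_nonneg fun i _ => Finset.sum_nonneg fun j _ => sq_nonneg _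
  have hSW : (0:ℝ) ≤ ∑ i, ∑ j, ((U + V) i j)^2 :=
    Finset.sum_nonneg fun i _ => Finset.sum_nonneg fun j _ => sq_nonneg _
  have ha2 : frobNorm U ^ 2 = ∑ i, ∑ j, U i j ^ 2 := Real.sq_sqrt hSU
  have hb2 : frobNorm V ^ 2 = ∑ i, ∑ j, V i j ^ 2 := Real.sq_sqrt hSV
  have hc2 : frobNorm (U + V) ^ 2 = ∑ i, ∑ j, ((U + V) i j) ^ 2 := Real.sq_sqrt hSW
  have hexp : (∑ i, ∑ j, ((U + V) i j)^2)
      = (∑ i, ∑ j, U i j ^ 2) + 2 * (∑ i, ∑ j, U i j * V i j) + ∑ i, ∑ j, V i j ^ 2 := by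
    simp only [Matrix.add_apply, add_sq]
    rw [Finset.mul_sum]
    simp_rw [Finset.sum_add_distrib, Finset.mul_sum]
    ring_nf
  have hpyth : frobNorm (U + V) ^ 2
      = frobNorm U ^ 2 + 2 * tin U V + frobNorm V ^ 2 := by
    rw [ha2, hb2, hc2, htin, hexp]
  have hcs2 : (∑ i, ∑ j, U i j * V i j) ^ 2
      ≤ (∑ i, ∑ j, U i j ^ 2) * ∑ i, ∑ j, V i j ^ 2 := by
    have h := Finset.sum_mul_sq_le_sq_mul_sq Finset.univ
      (fun p : Fin m × Fin n => U p.1 p.2) (fun p => V p.1 p.2)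
    simpa [Fintype.sum_prod_type] using h
  have hU' : ∃ i j, U i j ≠ 0 := by
    by_contra h
    push_neg at h
    exact hU (by ext i j; simpa using h i j)
  obtain ⟨i0, j0, hij⟩ := hU'
  have hSUpos : 0 < ∑ i, ∑ j, U i j ^ 2 := by
    have h1 : U i0 j0 ^ 2 ≤ ∑ j, U i0 j ^ 2 :=
      Finset.single_le_sum (f := fun j => U i0 j ^ 2) (fun j _ => sq_nonneg _)
        (Finset.mem_univ j0)
    have h2 : ∑ j, U i0 j ^ 2 ≤ ∑ i, ∑ j, U i j ^ 2 :=
      Finset.single_le_sum (f := fun i => ∑ j, U i j ^ 2)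
        (fun i _ => Finset.sum_nonneg fun j _ => sq_nonneg _) (Finset.mem_univ i0)
    have h0 : 0 < U i0 j0 ^ 2 := by positivity
    linarith
  have ha : 0 < frobNorm U := Real.sqrt_pos.mpr hSUpos
  have hb : 0 ≤ frobNorm V := Real.sqrt_nonneg _
  have hc : 0 ≤ frobNorm (U + V) := Real.sqrt_nonneg _
  have habn : 0 ≤ frobNorm U * frobNorm V := mul_nonneg ha.le hb
  have ht2 : tin U V ^ 2 ≤ (frobNorm U * frobNorm V) ^ 2 := by
    rw [mul_pow, ha2, hb2, htin]
    exact hcs2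
  have hcs : -(frobNorm U * frobNorm V) ≤ tin U V := by
    nlinarith [sq_nonneg (tin U V + frobNorm U * frobNorm V)]
  exact key_scalar hα1 hα2 ha hb hc hpyth hcs
end

section
/- Let f₁,…,f_N : ℝ^{m×n} → ℝ be differentiable and suppose there exists L_* > 0 such that ‖∇f_i(X) − ∇f_i(Y)‖_* ≤ L_*‖X − Y‖ for all X, Y ∈ ℝ^{m×n} and all i (spectral norm on the right). Set f := (1/N)∑_{i=1}^N f_i. Then for any X₁,…,X_N ∈ ℝ^{m×n} with average X̄ := (1/N)∑_{i=1}^N X_i and vertical stacking X_{[N]}, it holds that ‖∇f(X̄) − (1/N)∑_{i=1}^N ∇f_i(X_i)‖_* ≤ L_* ‖X_{[N]} − 1_N ⊗ X̄‖, where the right-hand norm is the spectral norm of the (Nm)×n matrix. -/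
open Matrix Kronecker

/-! ### Auxiliary machinery -/

/-- Euclidean norm of a plain vector. -/
noncomputable def vnorm {κ : Type*} [Fintype κ] (v : κ → ℝ) : ℝ := Real.sqrt (∑ i, v i ^ 2)

section VN
variable {ι κ : Type*} [Fintype ι] [Fintype κ]

lemma vnorm_nonneg (v : κ → ℝ) : 0 ≤ vnorm v := Real.sqrt_nonneg _

lemma vnorm_sq (v : κ → ℝ) : vnorm v ^ 2 = ∑ i, v i ^ 2 := Real.sq_sqrt (by positivity)

lemma dot_self_eq (v : κ → ℝ) : v ⬝ᵥ v = vnorm v ^ 2 := by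
  rw [vnorm_sq]; simp [dotProduct, sq]

lemma vnorm_eq_sqrt_dot (v : κ → ℝ) : vnorm v = Real.sqrt (v ⬝ᵥ v) := by
  rw [dot_self_eq, Real.sqrt_sq (vnorm_nonneg v)]

lemma vnorm_le_of_sq_le_sq {v : κ → ℝ} {w : ι → ℝ} (h : vnorm v ^ 2 ≤ vnorm w ^ 2) :
    vnorm v ≤ vnorm w := by
  rw [← Real.sqrt_sq (vnorm_nonneg v), ← Real.sqrt_sq (vnorm_nonneg w)]
  exact Real.sqrt_le_sqrt h

lemma dot_le (x y : ι → ℝ) : x ⬝ᵥ y ≤ vnorm x * vnorm y := by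
  have h := Finset.sum_mul_sq_le_sq_mul_sq Finset.univ x y
  calc x ⬝ᵥ y ≤ |x ⬝ᵥ y| := le_abs_self _
    _ = Real.sqrt ((∑ i, x i * y i) ^ 2) := by rw [Real.sqrt_sq_eq_abs]; rfl
    _ ≤ Real.sqrt ((∑ i, x i ^ 2) * ∑ i, y i ^ 2) := Real.sqrt_le_sqrt h
    _ = vnorm x * vnorm y := by
        rw [Real.sqrt_mul (by positivity)]; rfl

lemma norm_equiv_symm (v : κ → ℝ) : ‖(WithLp.equiv 2 (κ → ℝ)).symm v‖ = vnorm v := by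
  rw [EuclideanSpace.norm_eq]
  unfold vnorm
  congr 1
  apply Finset.sum_congr rfl
  intro i _
  rw [WithLp.equiv_symm_apply, PiLp.toLp_apply, Real.norm_eq_abs, sq_abs]

lemma dot_mulVec_mulVec (B A : Matrix ι κ ℝ) (u : κ → ℝ) :
    (B *ᵥ u) ⬝ᵥ (A *ᵥ u) = u ⬝ᵥ ((Bᵀ * A) *ᵥ u) := by
  rw [Matrix.dotProduct_mulVec, Matrix.vecMul_mulVec, Matrix.dotProduct_mulVec]

lemma col_dot (V M : Matrix κ κ ℝ) (k : κ) :
    (Vᵀ * M * V) k k = (fun i => V i k) ⬝ᵥ (M *ᵥ fun i => V i k) := by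
  simp only [Matrix.mul_apply, Matrix.transpose_apply, dotProduct, Matrix.mulVec,
    Finset.sum_mul, Finset.mul_sum]
  rw [Finset.sum_comm]
  exact Finset.sum_congr rfl fun i _ => Finset.sum_congr rfl fun j _ => by ring

end VN

section SN
variable {ι κ : Type*} [Fintype ι] [Fintype κ] [DecidableEq κ]

lemma specNorm_nonneg (A : Matrix ι κ ℝ) : 0 ≤ specNorm A := norm_nonneg _

lemma vnorm_mulVec_le (A : Matrix ι κ ℝ) (v : κ → ℝ) :
    vnorm (A *ᵥ v) ≤ specNorm A * vnorm v := by
  have h := (LinearMap.toContinuousLinearMap (Matrix.toEuclideanLin A)).le_opNorm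
      ((WithLp.equiv 2 (κ → ℝ)).symm v)
  rw [LinearMap.coe_toContinuousLinearMap'] at h
  rw [WithLp.equiv_symm_apply, Matrix.toEuclideanLin_apply_piLp_toLp, ← WithLp.equiv_symm_apply,
    norm_equiv_symm, ← WithLp.equiv_symm_apply, norm_equiv_symm] at h
  exact h

lemma specNorm_le_of (A : Matrix ι κ ℝ) {C : ℝ} (hC : 0 ≤ C)
    (h : ∀ v, vnorm (A *ᵥ v) ≤ C * vnorm v) : specNorm A ≤ C := by
  apply ContinuousLinearMap.opNorm_le_bound _ hC
  intro x
  have h2 := h ((WithLp.equiv 2 (κ → ℝ)) x)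
  have hx : x = (WithLp.equiv 2 (κ → ℝ)).symm ((WithLp.equiv 2 (κ → ℝ)) x) := rfl
  rw [LinearMap.coe_toContinuousLinearMap']
  conv_lhs => rw [hx]
  rw [WithLp.equiv_symm_apply, Matrix.toEuclideanLin_apply_piLp_toLp, ← WithLp.equiv_symm_apply,
    norm_equiv_symm]
  conv_rhs => rw [hx]
  rw [norm_equiv_symm]
  exact h2

end SN

section Spec
variable {ι κ : Type*} [Fintype ι] [Fintype κ] [DecidableEq κ] (A : Matrix ι κ ℝ)

/-- Orthogonal eigenvector matrix of `Aᵀ * A`. -/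
noncomputable def Vm : Matrix κ κ ℝ :=
  (Matrix.posSemidef_conjTranspose_mul_self A).1.eigenvectorUnitary

/-- Eigenvalues of `Aᵀ * A`. -/
noncomputable def lam : κ → ℝ :=
  (Matrix.posSemidef_conjTranspose_mul_self A).1.eigenvalues

lemma lam_nonneg (k : κ) : 0 ≤ lam A k :=
  (Matrix.posSemidef_conjTranspose_mul_self A).eigenvalues_nonneg k

lemma Vm_orth₁ : (Vm A)ᵀ * Vm A = 1 := by
  have := Unitary.coe_star_mul_self
    ((Matrix.posSemidef_conjTranspose_mul_self A).1.eigenvectorUnitary)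
  rwa [Matrix.star_eq_conjTranspose, Matrix.conjTranspose_eq_transpose_of_trivial] at this

lemma Vm_orth₂ : Vm A * (Vm A)ᵀ = 1 := by
  have := Unitary.coe_mul_star_self
    ((Matrix.posSemidef_conjTranspose_mul_self A).1.eigenvectorUnitary)
  simp only [Unitary.coe_star, Matrix.star_eq_conjTranspose,
    Matrix.conjTranspose_eq_transpose_of_trivial] at this
  exact this

lemma diag_eq : (Vm A)ᵀ * (Aᵀ * A) * Vm A = Matrix.diagonal (lam A) := by
  have hs := (Matrix.posSemidef_conjTranspose_mul_self A).1.spectral_theorem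
  rw [Unitary.conjStarAlgAut_apply] at hs
  rw [← Matrix.conjTranspose_eq_transpose_of_trivial A, hs]
  have e1 := Vm_orth₁ A
  have hst : star ((Matrix.posSemidef_conjTranspose_mul_self A).1.eigenvectorUnitary :
      Matrix κ κ ℝ) = (Vm A)ᵀ := by
    rw [Matrix.star_eq_conjTranspose,
      Matrix.conjTranspose_eq_transpose_of_trivial]; rfl
  have hU : ((Matrix.posSemidef_conjTranspose_mul_self A).1.eigenvectorUnitary :
      Matrix κ κ ℝ) = Vm A := rfl
  rw [hst, hU]
  simp only [← Matrix.mul_assoc, e1, Matrix.one_mul]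
  rw [Matrix.mul_assoc, e1, Matrix.mul_one]
  simp [lam]

lemma nucNorm_eq : nucNorm A = ∑ k, Real.sqrt (lam A k) := by
  rw [nucNorm]
  rw [Matrix.trace_mul_cycle]
  have h := Vm_orth₁ A
  rw [Vm] at h
  rw [Matrix.star_eq_conjTranspose, Matrix.conjTranspose_eq_transpose_of_trivial]
  rw [h, Matrix.one_mul, Matrix.trace_diagonal]
  simp [lam, Vm]

lemma nucNorm_nonneg : 0 ≤ nucNorm A := by
  rw [nucNorm_eq]; positivity

lemma vnorm_col (k : κ) : vnorm (fun i => Vm A i k) = 1 := by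
  have h := col_dot (Vm A) 1 k
  rw [Matrix.mul_one, Vm_orth₁ A, Matrix.one_mulVec] at h
  rw [vnorm_eq_sqrt_dot, ← h]
  simp [Matrix.one_apply]

lemma vnorm_mul_col (k : κ) : vnorm (A *ᵥ fun i => Vm A i k) = Real.sqrt (lam A k) := by
  rw [vnorm_eq_sqrt_dot, dot_mulVec_mulVec, ← col_dot, diag_eq]
  simp

lemma tin_le_nuc (B : Matrix ι κ ℝ) : tin B A ≤ specNorm B * nucNorm A := by
  have h1 : tin B A = ∑ k, (fun i => Vm A i k) ⬝ᵥ ((Bᵀ * A) *ᵥ fun i => Vm A i k) := by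
    have h2 : Matrix.trace ((Vm A)ᵀ * (Bᵀ * A) * Vm A) = tin B A := by
      rw [Matrix.trace_mul_cycle, Vm_orth₂, Matrix.one_mul, tin]
    rw [← h2, Matrix.trace]
    exact Finset.sum_congr rfl fun k _ => col_dot _ _ k
  rw [h1, nucNorm_eq, Finset.mul_sum]
  apply Finset.sum_le_sum
  intro k _
  calc (fun i => Vm A i k) ⬝ᵥ ((Bᵀ * A) *ᵥ fun i => Vm A i k)
      = (B *ᵥ fun i => Vm A i k) ⬝ᵥ (A *ᵥ fun i => Vm A i k) := (dot_mulVec_mulVec _ _ _).symm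
    _ ≤ vnorm (B *ᵥ fun i => Vm A i k) * vnorm (A *ᵥ fun i => Vm A i k) := dot_le _ _
    _ ≤ (specNorm B * 1) * Real.sqrt (lam A k) := by
        rw [vnorm_mul_col]
        apply mul_le_mul_of_nonneg_right _ (Real.sqrt_nonneg _)
        have h3 := vnorm_mulVec_le B (fun i => Vm A i k)
        rwa [vnorm_col] at h3
    _ = specNorm B * Real.sqrt (lam A k) := by ring

lemma exists_dual : ∃ B : Matrix ι κ ℝ, specNorm B ≤ 1 ∧ tin B A = nucNorm A := by
  classical
  set V := Vm A with hV
  set d : κ → ℝ := fun k => if lam A k = 0 then 0 else (Real.sqrt (lam A k))⁻¹ with hd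
  set W : Matrix κ κ ℝ := V * Matrix.diagonal d * Vᵀ with hW
  have hWt : Wᵀ = W := by
    rw [hW]
    simp [Matrix.transpose_mul, Matrix.diagonal_transpose, Matrix.mul_assoc]
  refine ⟨A * W, ?_, ?_⟩
  · -- spectral norm bound
    set e : κ → ℝ := fun k => d k * (lam A k * d k) with he
    have he1 : ∀ k, e k ≤ 1 := by
      intro k
      rw [he]
      by_cases h : lam A k = 0
      · simp [hd, h]
      · have hpos : 0 < lam A k := lt_of_le_of_ne (lam_nonneg A k) (Ne.symm h)
        have hs : 0 < Real.sqrt (lam A k) := Real.sqrt_pos.mpr hpos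
        simp only [hd, if_neg h]
        rw [show lam A k = Real.sqrt (lam A k) * Real.sqrt (lam A k) from
          (Real.mul_self_sqrt (lam_nonneg A k)).symm]
        field_simp
        rw [Real.sq_sqrt (sq_nonneg _)]
    have hE : Matrix.diagonal e
        = Matrix.diagonal d * (Matrix.diagonal (lam A) * Matrix.diagonal d) := by
      rw [Matrix.diagonal_mul_diagonal, Matrix.diagonal_mul_diagonal]
    have hBtB : (A * W)ᵀ * (A * W) = V * (Matrix.diagonal e * Vᵀ) := by
      rw [Matrix.transpose_mul, hWt, hE, ← diag_eq A, hW]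
      simp only [Matrix.mul_assoc]
      rfl
    apply specNorm_le_of _ zero_le_one
    intro v
    rw [one_mul]
    apply vnorm_le_of_sq_le_sq
    rw [← dot_self_eq, ← dot_self_eq, dot_mulVec_mulVec, hBtB]
    rw [← Matrix.mulVec_mulVec, ← Matrix.mulVec_mulVec]
    rw [Matrix.dotProduct_mulVec v V, ← Matrix.mulVec_transpose]
    set w : κ → ℝ := Vᵀ *ᵥ v with hw
    have hww : w ⬝ᵥ w = v ⬝ᵥ v := by
      rw [hw, dot_mulVec_mulVec, Matrix.transpose_transpose, Vm_orth₂, Matrix.one_mulVec]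
    calc w ⬝ᵥ (Matrix.diagonal e *ᵥ w) = ∑ k, e k * w k ^ 2 := by
          simp only [dotProduct, Matrix.mulVec_diagonal]
          exact Finset.sum_congr rfl fun k _ => by ring
      _ ≤ ∑ k, w k ^ 2 := by
          apply Finset.sum_le_sum
          intro k _
          calc e k * w k ^ 2 ≤ 1 * w k ^ 2 :=
                mul_le_mul_of_nonneg_right (he1 k) (sq_nonneg _)
            _ = w k ^ 2 := one_mul _
      _ = w ⬝ᵥ w := by simp [dotProduct, sq]
      _ = v ⬝ᵥ v := hww
  · -- trace equality
    have h1 : (A * W)ᵀ * A = W * (Aᵀ * A) := by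
      rw [Matrix.transpose_mul, hWt, Matrix.mul_assoc]
    rw [tin, h1, hW]
    rw [Matrix.mul_assoc (V * Matrix.diagonal d), Matrix.trace_mul_cycle]
    rw [show Vᵀ * (Aᵀ * A) * V = Matrix.diagonal (lam A) from diag_eq A]
    rw [Matrix.diagonal_mul_diagonal, Matrix.trace_diagonal, nucNorm_eq]
    apply Finset.sum_congr rfl
    intro k _
    by_cases h : lam A k = 0
    · simp [hd, h]
    · have hpos : 0 < lam A k := lt_of_le_of_ne (lam_nonneg A k) (Ne.symm h)
      have hs : Real.sqrt (lam A k) ≠ 0 := ne_of_gt (Real.sqrt_pos.mpr hpos)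
      simp only [hd, if_neg h]
      rw [show lam A k = Real.sqrt (lam A k) * Real.sqrt (lam A k) from
        (Real.mul_self_sqrt (lam_nonneg A k)).symm]
      field_simp
      rw [Real.sq_sqrt (sq_nonneg _)]

end Spec

section TIN
variable {ι κ γ : Type*} [Fintype ι] [Fintype κ]

lemma tin_eq_sum (A B : Matrix ι κ ℝ) : tin A B = ∑ i, ∑ j, A i j * B i j := by
  rw [tin, Matrix.trace]
  simp only [Matrix.diag, Matrix.mul_apply, Matrix.transpose_apply]
  rw [Finset.sum_comm]

lemma tin_smul_right (c : ℝ) (A B : Matrix ι κ ℝ) : tin A (c • B) = c * tin A B := by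
  rw [tin, tin, Matrix.mul_smul, Matrix.trace_smul, smul_eq_mul]

lemma tin_sum_right (s : Finset γ) (A : Matrix ι κ ℝ) (f : γ → Matrix ι κ ℝ) :
    tin A (∑ i ∈ s, f i) = ∑ i ∈ s, tin A (f i) := by
  rw [tin, Matrix.mul_sum, Matrix.trace_sum]
  rfl

lemma tin_sub_right (A B C : Matrix ι κ ℝ) : tin A (B - C) = tin A B - tin A C := by
  rw [tin, tin, tin, Matrix.mul_sub, Matrix.trace_sub]

lemma tin_sub_left (A B C : Matrix ι κ ℝ) : tin (A - B) C = tin A C - tin B C := by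
  rw [tin, tin, tin, Matrix.transpose_sub, Matrix.sub_mul, Matrix.trace_sub]

lemma tin_smul_left (c : ℝ) (A B : Matrix ι κ ℝ) : tin (c • A) B = c * tin A B := by
  rw [tin, tin, Matrix.transpose_smul, Matrix.smul_mul, Matrix.trace_smul, smul_eq_mul]

lemma tin_sum_left (s : Finset γ) (f : γ → Matrix ι κ ℝ) (B : Matrix ι κ ℝ) :
    tin (∑ i ∈ s, f i) B = ∑ i ∈ s, tin (f i) B := by
  rw [tin, Matrix.transpose_sum, Matrix.sum_mul, Matrix.trace_sum]
  rfl

lemma tin_self_zero {D : Matrix ι κ ℝ} (h : tin D D = 0) : D = 0 := by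
  rw [tin_eq_sum] at h
  ext i j
  have h1 : ∀ i ∈ Finset.univ (α := ι), (0:ℝ) ≤ ∑ j, D i j * D i j :=
    fun i _ => Finset.sum_nonneg fun j _ => mul_self_nonneg _
  have h2 := (Finset.sum_eq_zero_iff_of_nonneg h1).mp h i (Finset.mem_univ i)
  have h3 := (Finset.sum_eq_zero_iff_of_nonneg
    (fun j _ => mul_self_nonneg (D i j))).mp h2 j (Finset.mem_univ j)
  simpa using mul_self_eq_zero.mp h3

end TIN

lemma specNorm_sub_block {N m n : ℕ} (Y : Fin N → Matrix (Fin m) (Fin n) ℝ)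
    (Z : Matrix (Fin m) (Fin n) ℝ) (i : Fin N) :
    specNorm (Z - Y i) ≤ specNorm (vstack Y - vstack fun _ => Z) := by
  apply specNorm_le_of _ (specNorm_nonneg _)
  intro v
  refine le_trans ?_ (vnorm_mulVec_le (vstack Y - vstack fun _ => Z) v)
  apply vnorm_le_of_sq_le_sq
  rw [vnorm_sq, vnorm_sq, Fintype.sum_prod_type]
  have key : ∀ r, ((Z - Y i) *ᵥ v) r = -(((vstack Y - vstack fun _ => Z) *ᵥ v) (i, r)) := by
    intro r
    simp only [Matrix.mulVec, dotProduct, Matrix.sub_apply, vstack]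
    rw [← Finset.sum_neg_distrib]
    exact Finset.sum_congr rfl fun j _ => by ring
  calc ∑ r, ((Z - Y i) *ᵥ v) r ^ 2
      = ∑ r, (((vstack Y - vstack fun _ => Z) *ᵥ v) (i, r)) ^ 2 := by
        exact Finset.sum_congr rfl fun r _ => by rw [key r]; ring
    _ ≤ ∑ j, ∑ r, (((vstack Y - vstack fun _ => Z) *ᵥ v) (j, r)) ^ 2 :=
        Finset.single_le_sum
          (f := fun j => ∑ r, (((vstack Y - vstack fun _ => Z) *ᵥ v) (j, r)) ^ 2)
          (fun j _ => by positivity) (Finset.mem_univ i)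

theorem stmt11 {N m n : ℕ} (hN : 0 < N)
    (f : Fin N → Matrix (Fin m) (Fin n) ℝ → ℝ)
    (g : Fin N → Matrix (Fin m) (Fin n) ℝ → Matrix (Fin m) (Fin n) ℝ)
    (hdiff : ∀ i X V, HasDerivAt (fun t : ℝ => f i (X + t • V)) (tin (g i X) V) 0)
    (L : ℝ) (hL : 0 < L)
    (hLip : ∀ i X Y, nucNorm (g i X - g i Y) ≤ L * specNorm (X - Y))
    (gf : Matrix (Fin m) (Fin n) ℝ → Matrix (Fin m) (Fin n) ℝ)
    (hgf : ∀ X V, HasDerivAt (fun t : ℝ => (N : ℝ)⁻¹ * ∑ i, f i (X + t • V)) (tin (gf X) V) 0) :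
    ∀ X : Fin N → Matrix (Fin m) (Fin n) ℝ,
      nucNorm (gf ((N : ℝ)⁻¹ • ∑ i, X i) - (N : ℝ)⁻¹ • ∑ i, g i (X i))
        ≤ L * specNorm (vstack X - vstack (fun _ => (N : ℝ)⁻¹ • ∑ i, X i)) := by
  intro X
  classical
  have hgfeq : ∀ Y, gf Y = (N : ℝ)⁻¹ • ∑ i, g i Y := by
    intro Y
    have hall : ∀ V, tin (gf Y - (N : ℝ)⁻¹ • ∑ i, g i Y) V = 0 := by
      intro V
      have h2 : HasDerivAt (fun t : ℝ => (N : ℝ)⁻¹ * ∑ i, f i (Y + t • V))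
          ((N : ℝ)⁻¹ * ∑ i, tin (g i Y) V) 0 :=
        HasDerivAt.const_mul _ (HasDerivAt.fun_sum fun i _ => hdiff i Y V)
      have h3 := (hgf Y V).unique h2
      rw [tin_sub_left, tin_smul_left, tin_sum_left, h3]
      ring
    have h0 := hall (gf Y - (N : ℝ)⁻¹ • ∑ i, g i Y)
    exact sub_eq_zero.mp (tin_self_zero h0)
  set Xb : Matrix (Fin m) (Fin n) ℝ := (N : ℝ)⁻¹ • ∑ i, X i with hXb
  obtain ⟨B, hB1, hB2⟩ := exists_dual (gf Xb - (N : ℝ)⁻¹ • ∑ i, g i (X i))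
  rw [← hB2]
  set S := specNorm (vstack X - vstack fun _ => Xb) with hS
  have hS0 : 0 ≤ S := specNorm_nonneg _
  have key : tin B (gf Xb - (N : ℝ)⁻¹ • ∑ i, g i (X i))
      = (N : ℝ)⁻¹ * ∑ i, tin B (g i Xb - g i (X i)) := by
    rw [hgfeq Xb, ← smul_sub, ← Finset.sum_sub_distrib, tin_smul_right, tin_sum_right]
  rw [key]
  have hbound : ∀ i, tin B (g i Xb - g i (X i)) ≤ L * S := by
    intro i
    calc tin B (g i Xb - g i (X i))
        ≤ specNorm B * nucNorm (g i Xb - g i (X i)) := tin_le_nuc _ _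
      _ ≤ 1 * nucNorm (g i Xb - g i (X i)) :=
          mul_le_mul_of_nonneg_right hB1 (nucNorm_nonneg _)
      _ = nucNorm (g i Xb - g i (X i)) := one_mul _
      _ ≤ L * specNorm (Xb - X i) := hLip i Xb (X i)
      _ ≤ L * S := mul_le_mul_of_nonneg_left (specNorm_sub_block X Xb i) hL.le
  have hNe : (N : ℝ) ≠ 0 := Nat.cast_ne_zero.mpr hN.ne'
  calc (N : ℝ)⁻¹ * ∑ i, tin B (g i Xb - g i (X i))
      ≤ (N : ℝ)⁻¹ * ∑ _i : Fin N, L * S := by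
        apply mul_le_mul_of_nonneg_left _ (by positivity)
        exact Finset.sum_le_sum fun i _ => hbound i
    _ = L * S := by
        rw [Finset.sum_const, Finset.card_univ, Fintype.card_fin, nsmul_eq_mul]
        field_simp
end
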